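/- arXiv:1903.03876 — 3 statements merged into one kernel-verified Lean document; each statement's English description precedes it below -/
import Mathlib

section
/- Let k be a field and F₁, F₂ ∈ k[x₀,…,xₙ] coprime homogeneous polynomials of degree d. Fix a monomial ordering and let m ≥ 2d. Set B₁ = {F₁·xⁱ : |i| = m−d}, B₂ = {F₂·xⁱ : |i| = m−d}, B₁' = {F₁·TM(F₂)·xⁱ : |i| = m−2d}. Then B = (B₁ \ B₁') ∪ B₂ is a k-basis of the degree-m homogeneous part (F₁,F₂)ₘ of the ideal (F₁,F₂). -/
/-- A monomial ordering on `k[x]` for variables indexed by `σ`: a total order on exponent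
vectors which is compatible with multiplication of monomials (addition of exponent
vectors) and has the monomial `1` (the zero vector) as least element. -/
structure MonomialOrdering (σ : Type*) where
  le : (σ →₀ ℕ) → (σ →₀ ℕ) → Prop
  le_refl : ∀ a, le a a
  le_trans : ∀ a b c, le a b → le b c → le a c
  le_antisymm : ∀ a b, le a b → le b a → a = b
  le_total : ∀ a b, le a b ∨ le b a
  add_right : ∀ a b c, le a b → le (a + c) (b + c)
  zero_le : ∀ a, le 0 a

/-- `m` is the trailing monomial of `F`: the least monomial (exponent vector) appearing
in `F` with a nonzero coefficient, with respect to the monomial ordering `o`. -/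
def IsTrailingMonomial {σ k : Type*} [CommSemiring k] (o : MonomialOrdering σ)
    (F : MvPolynomial σ k) (m : σ →₀ ℕ) : Prop :=
  m ∈ F.support ∧ ∀ m' ∈ F.support, o.le m m'

open MvPolynomial

namespace Stmt3Aux

variable {σ : Type*} {k : Type*} [Field k]

lemma sum_eq_degree (d : σ →₀ ℕ) : (d.sum fun _ e => e) = d.degree := rfl

lemma degree_add (a b : σ →₀ ℕ) : (a + b).degree = a.degree + b.degree := by
  simp [Finsupp.degree_eq_weight_one, map_add]

lemma min_of_finset (o : MonomialOrdering σ) (s : Finset (σ →₀ ℕ)) :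
    s.Nonempty → ∃ a ∈ s, ∀ b ∈ s, o.le a b := by
  classical
  refine Finset.induction_on s (by rintro ⟨a, ha⟩; exact absurd ha (Finset.notMem_empty a)) ?_
  intro a s _ ih _
  rcases s.eq_empty_or_nonempty with rfl | hs
  · refine ⟨a, Finset.mem_insert_self a _, ?_⟩
    intro b hb
    rcases Finset.mem_insert.1 hb with rfl | hb
    · exact o.le_refl b
    · exact absurd hb (Finset.notMem_empty b)
  · obtain ⟨b, hb, hmin⟩ := ih hs
    rcases o.le_total a b with h | h
    · refine ⟨a, Finset.mem_insert_self a _, ?_⟩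
      intro c hc
      rcases Finset.mem_insert.1 hc with rfl | hc
      · exact o.le_refl c
      · exact o.le_trans _ _ _ h (hmin c hc)
    · refine ⟨b, Finset.mem_insert_of_mem hb, ?_⟩
      intro c hc
      rcases Finset.mem_insert.1 hc with rfl | hc
      · exact h
      · exact hmin c hc

lemma tm_mul_mem_support (o : MonomialOrdering σ) {F G : MvPolynomial σ k} {s u : σ →₀ ℕ}
    (hF : IsTrailingMonomial o F s) (hG : IsTrailingMonomial o G u) :
    s + u ∈ (F * G).support := by
  classical
  rw [mem_support_iff, coeff_mul]
  have key : ∑ p ∈ Finset.HasAntidiagonal.antidiagonal (s + u), coeff p.1 F * coeff p.2 G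
      = coeff s F * coeff u G := by
    refine Finset.sum_eq_single_of_mem (s, u) (Finset.HasAntidiagonal.mem_antidiagonal.2 rfl) ?_
    rintro ⟨a, b⟩ hab hne
    have hab' : a + b = s + u := Finset.HasAntidiagonal.mem_antidiagonal.1 hab
    by_cases haF : a ∈ F.support
    · by_cases hbG : b ∈ G.support
      · exfalso
        have h1 : o.le s a := hF.2 a haF
        have h2 : o.le u b := hG.2 b hbG
        have h3 : o.le (s + u) (a + u) := o.add_right _ _ _ h1
        have h4 : o.le (a + u) (s + u) := by
          have h5 := o.add_right u b a h2
          rwa [add_comm u a, add_comm b a, hab'] at h5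
        have h6 : s + u = a + u := o.le_antisymm _ _ h3 h4
        have ha : a = s := by
          have := h6.symm
          exact add_right_cancel this
        have hb' : b = u := by
          subst ha
          exact add_left_cancel hab'
        exact hne (by simp [ha, hb'])
      · simp [MvPolynomial.notMem_support_iff.1 hbG]
    · simp [MvPolynomial.notMem_support_iff.1 haF]
  rw [key]
  exact mul_ne_zero (mem_support_iff.1 hF.1) (mem_support_iff.1 hG.1)

lemma not_isUnit_of_homogeneous {F : MvPolynomial σ k} {d : ℕ} (hd : 0 < d)
    (hF : F.IsHomogeneous d) (h : IsUnit F) : False := by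
  have h0 : coeff 0 F = 0 := by
    refine hF.coeff_eq_zero ?_
    simp only [map_zero]
    omega
  have hu := h.map (constantCoeff (σ := σ) (R := k))
  rw [show constantCoeff F = coeff 0 F from rfl, h0] at hu
  simp at hu

lemma mul_mem_span {F : MvPolynomial σ k} (M : Submodule k (MvPolynomial σ k)) (N : ℕ)
    (hS : ∀ j : σ →₀ ℕ, j.degree = N → F * monomial j 1 ∈ M)
    (G : MvPolynomial σ k) (hG : ∀ j ∈ G.support, Finsupp.degree j = N) :
    F * G ∈ M := by
  classical
  have hFG : F * G = ∑ j ∈ G.support, (coeff j G) • (F * monomial j 1) := by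
    conv_lhs => rw [G.as_sum]
    rw [Finset.mul_sum]
    refine Finset.sum_congr rfl fun j _ => ?_
    rw [← mul_smul_comm, smul_monomial, smul_eq_mul, mul_one]
  rw [hFG]
  exact Submodule.sum_mem _ fun j hj => Submodule.smul_mem _ _ (hS j (hG j hj))

lemma hc_mul {F : MvPolynomial σ k} {d m : ℕ} (hF : F.IsHomogeneous d) (hdm : d ≤ m)
    (A : MvPolynomial σ k) :
    homogeneousComponent m (A * F) = homogeneousComponent (m - d) A * F := by
  induction A using MvPolynomial.induction_on' with
  | monomial u a =>
    have h1 : (monomial u a : MvPolynomial σ k) * F ∈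
        homogeneousSubmodule σ k (u.degree + d) :=
      (mem_homogeneousSubmodule _ _).2 ((isHomogeneous_monomial a rfl).mul hF)
    have h2 : (monomial u a : MvPolynomial σ k) ∈ homogeneousSubmodule σ k u.degree :=
      (mem_homogeneousSubmodule _ _).2 (isHomogeneous_monomial a rfl)
    rw [homogeneousComponent_of_mem h1, homogeneousComponent_of_mem h2]
    by_cases h : m = u.degree + d
    · rw [if_pos h, if_pos (by omega)]
    · rw [if_neg h, if_neg (by omega), zero_mul]
  | add p q hp hq => rw [add_mul, map_add, hp, hq, map_add, add_mul]

end Stmt3Aux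

/-- Let `F₁, F₂` be coprime homogeneous polynomials of degree `d` over a field `k`, fix a
monomial ordering, let `m ≥ 2d`, and let `TM(F₂) = t` be the trailing monomial of `F₂`.
With `B₁ = {F₁·xⁱ : |i| = m−d}`, `B₂ = {F₂·xⁱ : |i| = m−d}`,
`B₁' = {F₁·TM(F₂)·xⁱ : |i| = m−2d}`, the set `B = (B₁ \ B₁') ∪ B₂` is a `k`-basis of
the degree-`m` homogeneous part `(F₁,F₂)ₘ` of the ideal `(F₁,F₂)`. -/
theorem stmt3 {k : Type*} [Field k] (n d m : ℕ) (hd : 0 < d) (hm : 2 * d ≤ m)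
    (o : MonomialOrdering (Fin (n + 1)))
    (F₁ F₂ : MvPolynomial (Fin (n + 1)) k)
    (h₁ : F₁.IsHomogeneous d) (h₂ : F₂.IsHomogeneous d)
    (hcop : ∀ p : MvPolynomial (Fin (n + 1)) k, p ∣ F₁ → p ∣ F₂ → IsUnit p)
    (t : Fin (n + 1) →₀ ℕ) (ht : IsTrailingMonomial o F₂ t)
    (B₁ B₂ B₁' : Set (MvPolynomial (Fin (n + 1)) k))
    (hB₁ : B₁ = {P | ∃ i : Fin (n + 1) →₀ ℕ,
      (i.sum fun _ e => e) = m - d ∧ P = F₁ * monomial i 1})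
    (hB₂ : B₂ = {P | ∃ i : Fin (n + 1) →₀ ℕ,
      (i.sum fun _ e => e) = m - d ∧ P = F₂ * monomial i 1})
    (hB₁' : B₁' = {P | ∃ i : Fin (n + 1) →₀ ℕ,
      (i.sum fun _ e => e) = m - 2 * d ∧ P = F₁ * monomial t 1 * monomial i 1}) :
    LinearIndependent k ((↑) : ((B₁ \ B₁') ∪ B₂ : Set (MvPolynomial (Fin (n + 1)) k)) →
        MvPolynomial (Fin (n + 1)) k) ∧
      Submodule.span k ((B₁ \ B₁') ∪ B₂) =
        (Ideal.span {F₁, F₂}).restrictScalars k ⊓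
          MvPolynomial.homogeneousSubmodule (Fin (n + 1)) k m := by
  classical
  have hF₂ne : F₂ ≠ 0 := by
    intro h
    have := ht.1
    rw [h] at this
    simp at this
  have hF₁ne : F₁ ≠ 0 := by
    intro h
    exact Stmt3Aux.not_isUnit_of_homogeneous hd h₂
      (hcop F₂ (by rw [h]; exact dvd_zero F₂) dvd_rfl)
  have hdeg_of_mem : ∀ (F : MvPolynomial (Fin (n + 1)) k) (e : ℕ), F.IsHomogeneous e →
      ∀ j ∈ F.support, Finsupp.degree j = e := by
    intro F e hF j hj
    by_contra hne
    exact (mem_support_iff.1 hj) (hF.coeff_eq_zero hne)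
  have ht_deg : t.degree = d := hdeg_of_mem F₂ d h₂ t ht.1
  have hcancel : ∀ a b : Fin (n + 1) →₀ ℕ,
      F₁ * monomial a (1:k) = F₁ * monomial b 1 → a = b := by
    intro a b h
    exact monomial_left_injective one_ne_zero (mul_left_cancel₀ hF₁ne h)
  set S₁ : Set (Fin (n + 1) →₀ ℕ) :=
    {j | Finsupp.degree j = m - d ∧
      ¬ ∃ i : Fin (n + 1) →₀ ℕ, Finsupp.degree i = m - 2 * d ∧ j = t + i} with hS₁def
  set S₂ : Set (Fin (n + 1) →₀ ℕ) := {j | Finsupp.degree j = m - d} with hS₂def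
  set v : ↥S₁ ⊕ ↥S₂ → MvPolynomial (Fin (n + 1)) k :=
    Sum.elim (fun j => F₁ * monomial j.1 1) (fun j => F₂ * monomial j.1 1) with hv
  have hB₁'alt : B₁' = {P | ∃ i : Fin (n + 1) →₀ ℕ,
      Finsupp.degree i = m - 2 * d ∧ P = F₁ * monomial (t + i) 1} := by
    rw [hB₁']
    ext P
    simp only [Set.mem_setOf_eq, Stmt3Aux.sum_eq_degree]
    constructor
    · rintro ⟨i, hi, rfl⟩
      exact ⟨i, hi, by rw [mul_assoc, monomial_mul, one_mul]⟩
    · rintro ⟨i, hi, rfl⟩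
      exact ⟨i, hi, by rw [mul_assoc, monomial_mul, one_mul]⟩
  have hrange : (B₁ \ B₁') ∪ B₂ = Set.range v := by
    ext P
    constructor
    · rintro (⟨hP1, hP1'⟩ | hP2)
      · rw [hB₁] at hP1
        obtain ⟨i, hideg, rfl⟩ := hP1
        rw [Stmt3Aux.sum_eq_degree] at hideg
        have hni : ¬ ∃ i' : Fin (n + 1) →₀ ℕ,
            Finsupp.degree i' = m - 2 * d ∧ i = t + i' := by
          rintro ⟨i', hi', rfl⟩
          exact hP1' (by rw [hB₁'alt]; exact ⟨i', hi', rfl⟩)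
        exact ⟨Sum.inl ⟨i, hideg, hni⟩, rfl⟩
      · rw [hB₂] at hP2
        obtain ⟨i, hideg, rfl⟩ := hP2
        exact ⟨Sum.inr ⟨i, hideg⟩, rfl⟩
    · rintro ⟨x, rfl⟩
      cases x with
      | inl j =>
        left
        constructor
        · rw [hB₁]
          exact ⟨j.1, j.2.1, rfl⟩
        · rw [hB₁'alt]
          rintro ⟨i, hideg, heq⟩
          exact j.2.2 ⟨i, hideg, hcancel _ _ heq⟩
      | inr j =>
        right
        rw [hB₂]
        exact ⟨j.1, j.2, rfl⟩
  have limon : ∀ (S : Set (Fin (n + 1) →₀ ℕ)),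
      LinearIndependent k (fun j : ↥S => monomial j.1 (1:k)) := by
    intro S
    have hb := (MvPolynomial.basisMonomials (Fin (n + 1)) k).linearIndependent
    have hc := hb.comp (Subtype.val : ↥S → _) Subtype.val_injective
    rw [coe_basisMonomials] at hc
    exact hc
  have lihalf : ∀ (F : MvPolynomial (Fin (n + 1)) k), F ≠ 0 → ∀ (S : Set (Fin (n + 1) →₀ ℕ)),
      LinearIndependent k (fun j : ↥S => F * monomial j.1 (1:k)) := by
    intro F hF S
    have hker : LinearMap.ker (LinearMap.mulLeft k F) = ⊥ := by
      rw [LinearMap.ker_eq_bot]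
      intro x y hxy
      simp only [LinearMap.mulLeft_apply] at hxy
      exact mul_left_cancel₀ hF hxy
    have hmap := (limon S).map' (LinearMap.mulLeft k F) hker
    have heq : (⇑(LinearMap.mulLeft k F) ∘ fun j : ↥S => monomial j.1 (1:k))
        = fun j : ↥S => F * monomial j.1 (1:k) := by
      funext j
      simp [LinearMap.mulLeft_apply]
    rwa [heq] at hmap
  have extract : ∀ (F : MvPolynomial (Fin (n + 1)) k) (S : Set (Fin (n + 1) →₀ ℕ))
      (p : MvPolynomial (Fin (n + 1)) k),
      p ∈ Submodule.span k (Set.range fun j : ↥S => F * monomial j.1 (1:k)) →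
      ∃ G : MvPolynomial (Fin (n + 1)) k, ↑G.support ⊆ S ∧ p = F * G := by
    intro F S p hp
    refine Submodule.span_induction ?_ ?_ ?_ ?_ hp
    · rintro x ⟨j, rfl⟩
      refine ⟨monomial j.1 1, ?_, rfl⟩
      rw [support_monomial]
      simp [j.2]
    · exact ⟨0, by simp, by simp⟩
    · rintro x y - - ⟨G, hG, rfl⟩ ⟨G', hG', rfl⟩
      refine ⟨G + G', ?_, by rw [mul_add]⟩
      intro w hw
      rcases Finset.mem_union.1 (MvPolynomial.support_add (Finset.mem_coe.1 hw)) with h | h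
      · exact hG (Finset.mem_coe.2 h)
      · exact hG' (Finset.mem_coe.2 h)
    · rintro a x - ⟨G, hG, rfl⟩
      refine ⟨a • G, ?_, by rw [mul_smul_comm]⟩
      intro w hw
      exact hG (Finset.mem_coe.2 (MvPolynomial.support_smul (Finset.mem_coe.1 hw)))
  have hdisj : Disjoint
      (Submodule.span k (Set.range fun j : ↥S₁ => F₁ * monomial j.1 (1:k)))
      (Submodule.span k (Set.range fun j : ↥S₂ => F₂ * monomial j.1 (1:k))) := by
    rw [Submodule.disjoint_def]
    intro p hp1 hp2
    obtain ⟨G₁, hG₁supp, rfl⟩ := extract F₁ S₁ p hp1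
    obtain ⟨G₂, -, hpeq⟩ := extract F₂ S₂ _ hp2
    by_cases hG₁ : G₁ = 0
    · rw [hG₁, mul_zero]
    exfalso
    have hdvd : F₂ ∣ G₁ := by
      refine UniqueFactorizationMonoid.dvd_of_dvd_mul_right_of_no_prime_factors hF₂ne
        ?_ ⟨G₂, hpeq⟩
      intro q hqF₂ hqF₁ hq
      exact hq.not_unit (hcop q hqF₁ hqF₂)
    obtain ⟨H, hH⟩ := hdvd
    have hHne : H ≠ 0 := by
      rintro rfl
      rw [mul_zero] at hH
      exact hG₁ hH
    obtain ⟨u, hu, humin⟩ := Stmt3Aux.min_of_finset o H.support (by simpa using hHne)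
    have hmem : t + u ∈ G₁.support := by
      rw [hH]
      exact Stmt3Aux.tm_mul_mem_support o ht ⟨hu, humin⟩
    obtain ⟨hdeg, hnot⟩ := hG₁supp (Finset.mem_coe.2 hmem)
    refine hnot ⟨u, ?_, rfl⟩
    rw [Stmt3Aux.degree_add] at hdeg
    omega
  have hli : LinearIndependent k v := by
    rw [hv, linearIndependent_sum, Sum.elim_comp_inl, Sum.elim_comp_inr]
    exact ⟨lihalf F₁ hF₁ne S₁, lihalf F₂ hF₂ne S₂, hdisj⟩
  constructor
  · rw [hrange]
    exact (linearIndepOn_id_range_iff hli.injective).mpr hli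
  · apply le_antisymm
    · rw [Submodule.span_le]
      rintro P hP
      have hP' : P ∈ B₁ ∪ B₂ := by
        rcases hP with h | h
        · exact Or.inl h.1
        · exact Or.inr h
      simp only [SetLike.mem_coe]
      rw [Submodule.mem_inf]
      rcases hP' with h | h
      · rw [hB₁] at h
        obtain ⟨i, hideg, rfl⟩ := h
        rw [Stmt3Aux.sum_eq_degree] at hideg
        refine ⟨?_, ?_⟩
        · rw [Submodule.restrictScalars_mem]
          exact Ideal.mul_mem_right _ _ (Ideal.subset_span (by simp))
        · rw [mem_homogeneousSubmodule]
          have := h₁.mul (isHomogeneous_monomial (1:k) hideg)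
          rwa [show d + (m - d) = m from by omega] at this
      · rw [hB₂] at h
        obtain ⟨i, hideg, rfl⟩ := h
        rw [Stmt3Aux.sum_eq_degree] at hideg
        refine ⟨?_, ?_⟩
        · rw [Submodule.restrictScalars_mem]
          exact Ideal.mul_mem_right _ _ (Ideal.subset_span (by simp))
        · rw [mem_homogeneousSubmodule]
          have := h₂.mul (isHomogeneous_monomial (1:k) hideg)
          rwa [show d + (m - d) = m from by omega] at this
    · have hfin : {j : Fin (n + 1) →₀ ℕ | Finsupp.degree j ≤ m - d}.Finite :=
        Finsupp.finite_of_degree_le (m - d)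
      set Tfin := hfin.toFinset with hTfin
      set rk : (Fin (n + 1) →₀ ℕ) → ℕ :=
        fun j => (Tfin.filter fun j' => o.le j j' ∧ j ≠ j').card with hrk
      have hlt : ∀ j j' : Fin (n + 1) →₀ ℕ, Finsupp.degree j = m - d →
          Finsupp.degree j' = m - d → o.le j j' → j ≠ j' → rk j' < rk j := by
        intro j j' hj hj' hle hne
        apply Finset.card_lt_card
        constructor
        · intro x hx
          rw [Finset.mem_filter] at hx ⊢
          obtain ⟨hxT, hlex, hnex⟩ := hx
          refine ⟨hxT, o.le_trans _ _ _ hle hlex, ?_⟩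
          rintro rfl
          exact hne (o.le_antisymm _ _ hle hlex)
        · intro hcon
          have hj'mem : j' ∈ Tfin.filter fun x => o.le j x ∧ j ≠ x := by
            rw [Finset.mem_filter]
            refine ⟨?_, hle, hne⟩
            rw [hTfin, Set.Finite.mem_toFinset]
            exact le_of_eq hj'
          have hbad := hcon hj'mem
          rw [Finset.mem_filter] at hbad
          exact hbad.2.2 rfl
      have key : ∀ (N : ℕ) (j : Fin (n + 1) →₀ ℕ), Finsupp.degree j = m - d → rk j < N →
          F₁ * monomial j 1 ∈ Submodule.span k ((B₁ \ B₁') ∪ B₂) := by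
        intro N
        induction N with
        | zero => intro j _ h; omega
        | succ N ih =>
          intro j hjdeg hjrk
          by_cases hcase : ∃ i : Fin (n + 1) →₀ ℕ,
              Finsupp.degree i = m - 2 * d ∧ j = t + i
          · obtain ⟨i, hideg, rfl⟩ := hcase
            have hB₂span : ∀ w : Fin (n + 1) →₀ ℕ, Finsupp.degree w = m - d →
                F₂ * monomial w 1 ∈ Submodule.span k ((B₁ \ B₁') ∪ B₂) := by
              intro w hw
              refine Submodule.subset_span (Or.inr ?_)
              rw [hB₂]
              exact ⟨w, hw, rfl⟩
            have hFi_hom : (F₁ * monomial i (1:k)).IsHomogeneous (m - d) := by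
              have := h₁.mul (isHomogeneous_monomial (1:k) hideg)
              rwa [show d + (m - 2 * d) = m - d from by omega] at this
            have htot : F₂ * (F₁ * monomial i 1) ∈
                Submodule.span k ((B₁ \ B₁') ∪ B₂) :=
              Stmt3Aux.mul_mem_span _ (m - d) hB₂span _ (hdeg_of_mem _ _ hFi_hom)
            have hstep : F₂ * (F₁ * monomial i 1)
                = ∑ s ∈ F₂.support, (F₂.coeff s) • (F₁ * monomial (s + i) 1) := by
              conv_lhs => rw [F₂.as_sum]
              rw [Finset.sum_mul]
              refine Finset.sum_congr rfl fun s _ => ?_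
              have h1 : monomial s (F₂.coeff s) * (F₁ * monomial i 1)
                  = F₁ * (monomial s (F₂.coeff s) * monomial i 1) := by ring
              rw [h1, monomial_mul, mul_one, ← mul_smul_comm, smul_monomial,
                smul_eq_mul, mul_one]
            have hrest : ∀ s ∈ F₂.support.erase t,
                F₁ * monomial (s + i) 1 ∈ Submodule.span k ((B₁ \ B₁') ∪ B₂) := by
              intro s hs
              have hsne : s ≠ t := Finset.ne_of_mem_erase hs
              have hsmem : s ∈ F₂.support := Finset.mem_of_mem_erase hs
              have hsdeg : Finsupp.degree s = d := hdeg_of_mem F₂ d h₂ s hsmem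
              have hdeg' : Finsupp.degree (s + i) = m - d := by
                rw [Stmt3Aux.degree_add]; omega
              have htideg : Finsupp.degree (t + i) = m - d := by
                rw [Stmt3Aux.degree_add]; omega
              have hne' : t + i ≠ s + i := by
                intro h
                exact hsne (add_right_cancel h.symm)
              have hltr := hlt (t + i) (s + i) htideg hdeg'
                (o.add_right t s i (ht.2 s hsmem)) hne'
              exact ih (s + i) hdeg' (by omega)
            have hct : F₂.coeff t ≠ 0 := mem_support_iff.1 ht.1
            have hsum_eq : (F₂.coeff t) • (F₁ * monomial (t + i) 1)
                = F₂ * (F₁ * monomial i 1)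
                  - ∑ s ∈ F₂.support.erase t, (F₂.coeff s) • (F₁ * monomial (s + i) 1) := by
              rw [hstep, ← Finset.add_sum_erase _ _ ht.1, add_sub_cancel_right]
            have hmem : (F₂.coeff t) • (F₁ * monomial (t + i) 1)
                ∈ Submodule.span k ((B₁ \ B₁') ∪ B₂) := by
              rw [hsum_eq]
              exact Submodule.sub_mem _ htot
                (Submodule.sum_mem _ fun s hs => Submodule.smul_mem _ _ (hrest s hs))
            have hfin2 := Submodule.smul_mem _ (F₂.coeff t)⁻¹ hmem
            rwa [smul_smul, inv_mul_cancel₀ hct, one_smul] at hfin2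
          · refine Submodule.subset_span (Or.inl ⟨?_, ?_⟩)
            · rw [hB₁]
              exact ⟨j, hjdeg, rfl⟩
            · rw [hB₁'alt]
              rintro ⟨i, hideg', heq⟩
              exact hcase ⟨i, hideg', hcancel _ _ heq⟩
      intro p hp
      rw [Submodule.mem_inf] at hp
      obtain ⟨hpI, hpH⟩ := hp
      rw [Submodule.restrictScalars_mem, Ideal.mem_span_pair] at hpI
      obtain ⟨A, C, hAC⟩ := hpI
      have hp_eq : p = homogeneousComponent (m - d) A * F₁
          + homogeneousComponent (m - d) C * F₂ := by
        have h0 : homogeneousComponent m p = p := by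
          rw [homogeneousComponent_of_mem hpH, if_pos rfl]
        conv_lhs => rw [← h0, ← hAC]
        rw [map_add, Stmt3Aux.hc_mul h₁ (by omega) A, Stmt3Aux.hc_mul h₂ (by omega) C]
      rw [hp_eq]
      refine Submodule.add_mem _ ?_ ?_
      · rw [mul_comm]
        exact Stmt3Aux.mul_mem_span _ (m - d)
          (fun w hw => key (rk w + 1) w hw (Nat.lt_succ_self _)) _
          (hdeg_of_mem _ _ (homogeneousComponent_isHomogeneous (m - d) A))
      · rw [mul_comm]
        refine Stmt3Aux.mul_mem_span _ (m - d) (fun w hw => ?_) _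
          (hdeg_of_mem _ _ (homogeneousComponent_isHomogeneous (m - d) C))
        refine Submodule.subset_span (Or.inr ?_)
        rw [hB₂]
        exact ⟨w, hw, rfl⟩
end

section
/- Let ψ₁,…,ψ_M be entire functions and W their Wronskian (the determinant of the matrix of derivatives ψ_j^{(i)}, 0 ≤ i ≤ M−1). Then for every z ∈ ℂ, ord_z⁺(W) ≥ ∑_{j=1}^M ord_z⁺(ψ_j) − M(M−1)/2, where ord_z⁺ denotes the nonnegative part of the vanishing order at z. -/
open MeasureTheory
open scoped Classical

noncomputable section

/-- The order of vanishing (negative for poles) of a meromorphic function at a point,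
as an integer; junk value `0` if the function is not meromorphic there or has order `⊤`. -/
def mord (f : ℂ → ℂ) (z : ℂ) : ℤ :=
  if h : MeromorphicAt f z then (meromorphicOrderAt f z).untopD 0 else 0

/-- The nonnegative part of the vanishing order: `ord_z⁺(f) = max{0, ord_z(f)}`. -/
def ordPlus (f : ℂ → ℂ) (z : ℂ) : ℤ := max 0 (mord f z)

/-- The order of the pole: `ord_z⁻(f) = max{0, −ord_z(f)}`. -/
def ordMinus (f : ℂ → ℂ) (z : ℂ) : ℤ := max 0 (-(mord f z))

/-- Integrated Nevanlinna counting function associated to a divisor `ν` on `ℂ`: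
`N(ν,r) = ∑_{0<|z|≤r} ν(z)·log(r/|z|) + ν(0)·log r`. -/
def countN (ν : ℂ → ℤ) (r : ℝ) : ℝ :=
  (∑ᶠ z ∈ {z : ℂ | 0 < ‖z‖ ∧ ‖z‖ ≤ r},
    (ν z : ℝ) * Real.log (r / ‖z‖)) + (ν 0 : ℝ) * Real.log r

/-- The proximity function `m_f(∞,r) = ∫₀^{2π} log⁺|f(re^{iθ})| dθ/2π`. -/
def proxInf (f : ℂ → ℂ) (r : ℝ) : ℝ :=
  (∫ θ in (0:ℝ)..(2 * Real.pi),
    max 0 (Real.log (‖f (r * Complex.exp (θ * Complex.I))‖))) / (2 * Real.pi)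

/-- The Nevanlinna characteristic `T_f(r) = m_f(∞,r) + N_f(∞,r)`. -/
def nevT (f : ℂ → ℂ) (r : ℝ) : ℝ := proxInf f r + countN (ordMinus f) r

/-- The Cartan characteristic of a holomorphic curve to `ℙ^{m-1}` computed from a reduced
representation `h = (h₀,…,h_{m-1})`:
`T(r) = ∫₀^{2π} log max_i |h_i(re^{iθ})| dθ/2π`. -/
def cartanT {m : ℕ} (h : Fin m → ℂ → ℂ) (r : ℝ) : ℝ :=
  (∫ θ in (0:ℝ)..(2 * Real.pi),
    Real.log ‖(fun i => h i (r * Complex.exp (θ * Complex.I)) : Fin m → ℂ)‖) / (2 * Real.pi)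

/-- The gcd counting function: the counting function of common zeros of `f` and `g`,
each counted with the minimum of the two vanishing orders. -/
def Ngcd (f g : ℂ → ℂ) (r : ℝ) : ℝ :=
  countN (fun z => min (ordPlus f z) (ordPlus g z)) r

/-- The gcd proximity function
`m_gcd(f,g,r) = −∫₀^{2π} log⁻ max{|f(re^{iθ})|,|g(re^{iθ})|} dθ/2π`. -/
def mgcd (f g : ℂ → ℂ) (r : ℝ) : ℝ :=
  -(∫ θ in (0:ℝ)..(2 * Real.pi),
      min 0 (Real.log (max (‖f (r * Complex.exp (θ * Complex.I))‖)
        (‖g (r * Complex.exp (θ * Complex.I))‖)))) / (2 * Real.pi)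

end

open Filter Topology

section WronskianAux

lemma AnalyticAt.derivAux {f : ℂ → ℂ} {z : ℂ} (hf : AnalyticAt ℂ f z) :
    AnalyticAt ℂ (deriv f) z := by
  have h1 : AnalyticAt ℂ (fderiv ℂ f) z := hf.fderiv
  have h2 : AnalyticAt ℂ (fun w => fderiv ℂ f w 1) z :=
    ((ContinuousLinearMap.apply ℂ ℂ (1 : ℂ)).analyticAt _).comp h1
  exact h2.congr (Filter.Eventually.of_forall fun w => fderiv_apply_one_eq_deriv)

lemma Differentiable.derivAux {f : ℂ → ℂ} (hf : Differentiable ℂ f) :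
    Differentiable ℂ (_root_.deriv f) :=
  fun w => ((hf.analyticAt w).derivAux).differentiableAt

lemma Differentiable.iteratedDerivAux {f : ℂ → ℂ} (hf : Differentiable ℂ f) (k : ℕ) :
    Differentiable ℂ (iteratedDeriv k f) := by
  induction k with
  | zero => simpa [iteratedDeriv_zero] using hf
  | succ k ih => rw [iteratedDeriv_succ]; exact ih.derivAux

/-- `f` vanishes to order at least `n` at `z`. -/
def Vz (z : ℂ) (n : ℕ) (f : ℂ → ℂ) : Prop :=
  ∃ g : ℂ → ℂ, AnalyticAt ℂ g z ∧ ∀ᶠ w in 𝓝 z, f w = (w - z) ^ n * g w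

lemma Vz_of_analyticAt {f : ℂ → ℂ} {z : ℂ} (hf : AnalyticAt ℂ f z) : Vz z 0 f :=
  ⟨f, hf, Filter.Eventually.of_forall fun w => by simp⟩

lemma Vz.mono {f : ℂ → ℂ} {z : ℂ} {m n : ℕ} (hmn : m ≤ n) (h : Vz z n f) : Vz z m f := by
  obtain ⟨g, hg, hfg⟩ := h
  refine ⟨fun w => (w - z) ^ (n - m) * g w,
    ((analyticAt_id.sub analyticAt_const).pow _).mul hg, ?_⟩
  filter_upwards [hfg] with w hw
  rw [hw, ← mul_assoc, ← pow_add, Nat.add_sub_cancel' hmn]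

lemma Vz.mul {f g : ℂ → ℂ} {z : ℂ} {m n : ℕ} (hf : Vz z m f) (hg : Vz z n g) :
    Vz z (m + n) (fun w => f w * g w) := by
  obtain ⟨a, ha, hfa⟩ := hf
  obtain ⟨b, hb, hgb⟩ := hg
  refine ⟨fun w => a w * b w, ha.mul hb, ?_⟩
  filter_upwards [hfa, hgb] with w h1 h2
  rw [h1, h2, pow_add]; ring

lemma Vz.add {f g : ℂ → ℂ} {z : ℂ} {n : ℕ} (hf : Vz z n f) (hg : Vz z n g) :
    Vz z n (fun w => f w + g w) := by
  obtain ⟨a, ha, hfa⟩ := hf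
  obtain ⟨b, hb, hgb⟩ := hg
  refine ⟨fun w => a w + b w, ha.add hb, ?_⟩
  filter_upwards [hfa, hgb] with w h1 h2
  rw [h1, h2]; ring

lemma Vz.const_mul {f : ℂ → ℂ} {z : ℂ} {n : ℕ} (c : ℂ) (hf : Vz z n f) :
    Vz z n (fun w => c * f w) := by
  obtain ⟨a, ha, hfa⟩ := hf
  exact ⟨fun w => c * a w, analyticAt_const.mul ha,
    by filter_upwards [hfa] with w h1; rw [h1]; ring⟩

lemma Vz.zero (z : ℂ) (n : ℕ) : Vz z n (fun _ => (0 : ℂ)) :=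
  ⟨fun _ => 0, analyticAt_const, Filter.Eventually.of_forall fun w => by simp⟩

lemma Vz.sum {ι : Type*} (s : Finset ι) {F : ι → ℂ → ℂ} {z : ℂ} {n : ℕ}
    (h : ∀ i ∈ s, Vz z n (F i)) : Vz z n (fun w => ∑ i ∈ s, F i w) := by
  classical
  induction s using Finset.induction_on with
  | empty => simpa using Vz.zero z n
  | @insert a s' hx ih =>
    simp only [Finset.sum_insert hx]
    exact (h a (Finset.mem_insert_self a s')).add
      (ih fun i hi => h i (Finset.mem_insert_of_mem hi))

lemma Vz.prod {ι : Type*} (s : Finset ι) {F : ι → ℂ → ℂ} {z : ℂ} {n : ι → ℕ}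
    (h : ∀ i ∈ s, Vz z (n i) (F i)) : Vz z (∑ i ∈ s, n i) (fun w => ∏ i ∈ s, F i w) := by
  classical
  induction s using Finset.induction_on with
  | empty => simpa using Vz_of_analyticAt analyticAt_const
  | @insert a s' hx ih =>
    simp only [Finset.prod_insert hx, Finset.sum_insert hx]
    exact (h a (Finset.mem_insert_self a s')).mul
      (ih fun i hi => h i (Finset.mem_insert_of_mem hi))

lemma Vz.derivAux {f : ℂ → ℂ} {z : ℂ} {n : ℕ} (hf : Differentiable ℂ f) (h : Vz z n f) :
    Vz z (n - 1) (deriv f) := by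
  obtain ⟨g, hg, hfg⟩ := h
  match n with
  | 0 => exact Vz_of_analyticAt ((hf.derivAux).analyticAt z)
  | (k + 1) =>
    have heq : f =ᶠ[𝓝 z] (fun w => (w - z) ^ (k + 1) * g w) := hfg
    have hd : deriv f =ᶠ[𝓝 z] deriv (fun w => (w - z) ^ (k + 1) * g w) := heq.deriv
    refine ⟨fun w => ((k : ℂ) + 1) * g w + (w - z) * deriv g w,
      (analyticAt_const.mul hg).add
        ((analyticAt_id.sub analyticAt_const).mul hg.derivAux), ?_⟩
    have hga : ∀ᶠ w in 𝓝 z, AnalyticAt ℂ g w := hg.eventually_analyticAt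
    filter_upwards [hd, hga] with w hw hwg
    have h1 : HasDerivAt (fun w' => (w' - z) ^ (k + 1) * g w')
        ((((k : ℂ) + 1) * (w - z) ^ k * 1) * g w + (w - z) ^ (k + 1) * deriv g w) w := by
      have hb : HasDerivAt (fun w' : ℂ => w' - z) 1 w := (hasDerivAt_id w).sub_const z
      have hp := hb.pow (k + 1)
      simp only [Nat.cast_add, Nat.cast_one, Nat.add_sub_cancel] at hp
      exact hp.mul hwg.differentiableAt.hasDerivAt
    rw [hw, h1.deriv, Nat.add_sub_cancel]
    ring

lemma Vz.iteratedDerivAux {f : ℂ → ℂ} {z : ℂ} {n : ℕ} (hf : Differentiable ℂ f)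
    (h : Vz z n f) (k : ℕ) : Vz z (n - k) (iteratedDeriv k f) := by
  induction k with
  | zero => simpa [iteratedDeriv_zero] using h
  | succ k ih =>
    rw [iteratedDeriv_succ]
    have := ih.derivAux (hf.iteratedDerivAux k)
    rwa [Nat.sub_sub] at this

lemma not_eventually_zero_aux {f : ℂ → ℂ} (hf : Differentiable ℂ f) (hne : ∃ w, f w ≠ 0)
    (z : ℂ) : ¬ ∀ᶠ w in 𝓝 z, f w = 0 := by
  intro h
  obtain ⟨w, hw⟩ := hne
  have hA : AnalyticOnNhd ℂ f Set.univ := fun u _ => hf.analyticAt u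
  have := hA.eqOn_zero_of_preconnected_of_frequently_eq_zero isPreconnected_univ
    (Set.mem_univ z) ((h.filter_mono nhdsWithin_le_nhds).frequently)
  exact hw (this (Set.mem_univ w))

lemma order_fin_aux {f : ℂ → ℂ} (hf : Differentiable ℂ f) (hne : ∃ w, f w ≠ 0) (z : ℂ) :
    ∃ a : ℕ, analyticOrderAt f z = (a : ℕ∞) := by
  have h := not_eventually_zero_aux hf hne z
  have h2 : analyticOrderAt f z ≠ ⊤ :=
    fun ht => h (analyticOrderAt_eq_top.mp ht)
  obtain ⟨a, ha⟩ := WithTop.ne_top_iff_exists.mp h2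
  exact ⟨a, ha.symm⟩

lemma mord_eq_aux {f : ℂ → ℂ} {z : ℂ} {a : ℕ} (hf : AnalyticAt ℂ f z)
    (ha : analyticOrderAt f z = (a : ℕ∞)) : mord f z = a := by
  have hm : MeromorphicAt f z := hf.meromorphicAt
  have h2 : meromorphicOrderAt f z = ((a : ℤ) : WithTop ℤ) := by
    rw [hf.meromorphicOrderAt_eq, ha]
    rfl
  rw [mord, dif_pos hm, h2]
  rfl

lemma Vz.le_order_aux {f : ℂ → ℂ} {z : ℂ} {n a : ℕ} (hf : AnalyticAt ℂ f z)
    (ha : analyticOrderAt f z = (a : ℕ∞)) (h : Vz z n f) : n ≤ a := by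
  by_contra hlt
  push_neg at hlt
  obtain ⟨g, hg, hgz, hfg⟩ := (hf.analyticOrderAt_eq_natCast (n := a)).mp ha
  obtain ⟨p, hp, hfp⟩ := h
  have key : ∀ᶠ w in 𝓝[≠] z, g w = (w - z) ^ (n - a) * p w := by
    filter_upwards [eventually_nhdsWithin_of_eventually_nhds hfg,
      eventually_nhdsWithin_of_eventually_nhds hfp, self_mem_nhdsWithin] with w h1 h2 hwz
    have hpow : (w - z) ^ a ≠ 0 := pow_ne_zero _ (sub_ne_zero.mpr hwz)
    apply mul_left_cancel₀ hpow
    rw [← mul_assoc, ← pow_add, Nat.add_sub_cancel' hlt.le, ← h2, h1, smul_eq_mul]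
  have t1 : Filter.Tendsto g (𝓝[≠] z) (𝓝 (g z)) :=
    hg.continuousAt.continuousWithinAt
  have t2 : Filter.Tendsto (fun w => (w - z) ^ (n - a) * p w) (𝓝[≠] z) (𝓝 0) := by
    have hc : Filter.Tendsto (fun w => (w - z) ^ (n - a) * p w) (𝓝 z)
        (𝓝 ((z - z) ^ (n - a) * p z)) :=
      (((continuous_id.sub continuous_const).pow _).continuousAt).mul hp.continuousAt
    have hz0 : (z - z) ^ (n - a) * p z = 0 := by
      rw [sub_self, zero_pow (Nat.sub_ne_zero_of_lt hlt), zero_mul]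
    rw [hz0] at hc
    exact hc.mono_left nhdsWithin_le_nhds
  have := tendsto_nhds_unique (t1.congr' key) t2
  exact hgz this

end WronskianAux

lemma diff_finset_prod_aux {ι : Type*} (s : Finset ι) (F : ι → ℂ → ℂ)
    (h : ∀ i ∈ s, Differentiable ℂ (F i)) :
    Differentiable ℂ (fun w => ∏ i ∈ s, F i w) := by
  classical
  induction s using Finset.induction_on with
  | empty => simpa using differentiable_const (1 : ℂ)
  | @insert a s' hx ih =>
    simp only [Finset.prod_insert hx]
    exact (h a (Finset.mem_insert_self a s')).mul
      (ih fun i hi => h i (Finset.mem_insert_of_mem hi))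

lemma diff_finset_sum_aux {ι : Type*} (s : Finset ι) (F : ι → ℂ → ℂ)
    (h : ∀ i ∈ s, Differentiable ℂ (F i)) :
    Differentiable ℂ (fun w => ∑ i ∈ s, F i w) := by
  classical
  induction s using Finset.induction_on with
  | empty => simpa using differentiable_const (0 : ℂ)
  | @insert a s' hx ih =>
    simp only [Finset.sum_insert hx]
    exact (h a (Finset.mem_insert_self a s')).add
      (ih fun i hi => h i (Finset.mem_insert_of_mem hi))

/-- Let `ψ₁,…,ψ_M` be entire functions, none identically zero, and let `W` be their
Wronskian, assumed not identically zero. Then for every `z ∈ ℂ`,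
`ord_z⁺(W) ≥ ∑ⱼ ord_z⁺(ψⱼ) − M(M−1)/2`. -/
theorem stmt18 (M : ℕ) (ψ : Fin M → ℂ → ℂ)
    (hent : ∀ j, Differentiable ℂ (ψ j))
    (hne : ∀ j, ∃ z, ψ j z ≠ 0)
    (W : ℂ → ℂ)
    (hW : W = fun z => Matrix.det (Matrix.of fun i j : Fin M => iteratedDeriv (i : ℕ) (ψ j) z))
    (hW0 : ∃ z, W z ≠ 0) (z : ℂ) :
    (∑ j, ordPlus (ψ j) z) - (M : ℤ) * ((M : ℤ) - 1) / 2 ≤ ordPlus W z := by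
  classical
  have hdet : W = fun z' => ∑ σ : Equiv.Perm (Fin M),
      ((Equiv.Perm.sign σ : ℤ) : ℂ) *
        ∏ i : Fin M, iteratedDeriv ((σ i : Fin M) : ℕ) (ψ i) z' := by
    rw [hW]
    funext z'
    rw [Matrix.det_apply']
    simp only [Matrix.of_apply]
  have hWdiff : Differentiable ℂ W := by
    rw [hdet]
    apply diff_finset_sum_aux
    intro σ _
    exact (differentiable_const _).mul
      (diff_finset_prod_aux _ _ fun i _ => (hent i).iteratedDerivAux _)
  choose a ha using fun j => order_fin_aux (hent j) (hne j) z
  have hVψ : ∀ j, Vz z (a j) (ψ j) := by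
    intro j
    obtain ⟨g, hg, hgz, hfg⟩ := (((hent j).analyticAt z).analyticOrderAt_eq_natCast (n := a j)).mp (ha j)
    exact ⟨g, hg, by filter_upwards [hfg] with w hw; rw [hw, smul_eq_mul]⟩
  set K : ℕ := ∑ i : Fin M, (i : ℕ) with hKdef
  have hVW : Vz z ((∑ j, a j) - K) W := by
    rw [hdet]
    apply Vz.sum
    intro σ _
    apply Vz.const_mul
    have hp := Vz.prod (Finset.univ) (n := fun i : Fin M => a i - ((σ i : Fin M) : ℕ))
      (fun i _ => Vz.iteratedDerivAux (hent i) (hVψ i) ((σ i : Fin M) : ℕ))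
    refine hp.mono ?_
    have h1 : ∑ i : Fin M, ((σ i : Fin M) : ℕ) = K :=
      Equiv.sum_comp σ (fun i : Fin M => (i : ℕ))
    rw [← h1]
    have h2 : ∑ j, a j ≤ ∑ i : Fin M, ((a i - ((σ i : Fin M) : ℕ)) + ((σ i : Fin M) : ℕ)) :=
      Finset.sum_le_sum fun i _ => le_tsub_add
    rw [Finset.sum_add_distrib] at h2
    exact tsub_le_iff_right.mpr h2
  obtain ⟨b, hb⟩ := order_fin_aux hWdiff hW0 z
  have hWb : (∑ j, a j) - K ≤ b := Vz.le_order_aux (hWdiff.analyticAt z) hb hVW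
  have hmordW : mord W z = b := mord_eq_aux (hWdiff.analyticAt z) hb
  have e1 : ∀ j, ordPlus (ψ j) z = (a j : ℤ) := by
    intro j
    rw [ordPlus, mord_eq_aux ((hent j).analyticAt z) (ha j)]
    exact max_eq_right (Int.natCast_nonneg _)
  have e2 : (((∑ j, a j) - K : ℕ) : ℤ) ≤ ordPlus W z := by
    rw [ordPlus, hmordW]
    exact le_trans (Nat.cast_le.mpr hWb) (le_max_right _ _)
  have hK : K = M * (M - 1) / 2 := by
    rw [hKdef, Fin.sum_univ_eq_sum_range (fun i => i) M, Finset.sum_range_id]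
  have hKZ : (M : ℤ) * ((M : ℤ) - 1) / 2 = (K : ℤ) := by
    rw [hK]
    rcases M with _ | m
    · simp
    · push_cast [Nat.succ_sub_one]
      congr 1
      ring
  have e3 : (∑ j, ordPlus (ψ j) z) = ((∑ j, a j : ℕ) : ℤ) := by
    rw [Nat.cast_sum]
    exact Finset.sum_congr rfl fun j _ => e1 j
  rw [e3, hKZ]
  omega
end

section
/- Let g(z) = exp(2πiz) and f(z) = exp(2πi·p(z)) where p ∈ ℤ[x] has degree at least 2. Then g−1 divides f−1 in the ring of entire functions (i.e., (f−1)/(g−1) extends to an entire function), while f and g are algebraically independent over ℂ. -/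
open Complex Polynomial

private lemma aux_diff_dslope {F : ℂ → ℂ} (hF : Differentiable ℂ F) (a : ℂ) :
    Differentiable ℂ (dslope F a) := by
  intro b
  rcases eq_or_ne b a with rfl | hb
  · obtain ⟨ps, hps⟩ := hF.analyticAt b
    exact hps.has_fpower_series_dslope_fslope.differentiableAt
  · exact (differentiableAt_dslope_of_ne hb).mpr (hF b)

private lemma aux_E_mul (w : ℂ) :
    Complex.exp w - 1 = dslope Complex.exp 0 w * w := by
  have h := sub_smul_dslope Complex.exp 0 w
  simp only [smul_eq_mul, sub_zero, Complex.exp_zero] at h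
  rw [mul_comm] at h
  exact h.symm

private lemma aux_E_zero : dslope Complex.exp 0 0 = 1 := by
  rw [dslope_same]
  simp

/-- Let `g(z) = exp(2πiz)` and `f(z) = exp(2πi·p(z))` with `p ∈ ℤ[x]` of degree at
least `2`. Then `g − 1` divides `f − 1` in the ring of entire functions, while `f` and
`g` are algebraically independent over `ℂ`. -/
theorem stmt19 (p : Polynomial ℤ) (hp : 2 ≤ p.natDegree) (f g : ℂ → ℂ)
    (hg : g = fun z => Complex.exp (2 * (Real.pi : ℂ) * Complex.I * z))
    (hf : f = fun z => Complex.exp (2 * (Real.pi : ℂ) * Complex.I * (Polynomial.aeval z p))) :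
    (∃ q : ℂ → ℂ, Differentiable ℂ q ∧ ∀ z, f z - 1 = q z * (g z - 1)) ∧
      AlgebraicIndependent ℂ ![f, g] := by
  classical
  set c : ℂ := 2 * (Real.pi : ℂ) * Complex.I with hcdef
  have hc : c ≠ 0 :=
    mul_ne_zero (mul_ne_zero two_ne_zero (Complex.ofReal_ne_zero.mpr Real.pi_ne_zero))
      Complex.I_ne_zero
  -- basic integrality facts
  have hPint : ∀ n : ℤ, (Polynomial.aeval ((n : ℤ) : ℂ) p : ℂ) = ((p.eval n : ℤ) : ℂ) := by
    intro n
    have : ((n : ℤ) : ℂ) = algebraMap ℤ ℂ n := by simp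
    rw [this, aeval_algebraMap_apply_eq_algebraMap_eval]
    simp
  have hexpint : ∀ m : ℤ, Complex.exp (c * (m : ℂ)) = 1 := by
    intro m
    rw [mul_comm]
    exact Complex.exp_int_mul_two_pi_mul_I m
  have hg1 : ∀ z : ℂ, g z = 1 ↔ ∃ n : ℤ, z = (n : ℂ) := by
    intro z
    constructor
    · intro h
      rw [hg] at h
      obtain ⟨n, hn⟩ := Complex.exp_eq_one_iff.mp h
      exact ⟨n, mul_left_cancel₀ hc (by rw [hn]; ring)⟩
    · rintro ⟨n, rfl⟩
      rw [hg]
      exact hexpint n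
  have hf1 : ∀ n : ℤ, f ((n : ℂ)) = 1 := by
    intro n
    rw [hf]
    simp only
    rw [hPint n, hexpint]
  -- differentiability of the pieces
  have hP : Differentiable ℂ (fun z : ℂ => (Polynomial.aeval z p : ℂ)) :=
    Polynomial.differentiable_aeval p
  have hfd : Differentiable ℂ f := by
    rw [hf]; exact (hP.const_mul c).cexp
  have hgd : Differentiable ℂ g := by
    rw [hg]; exact (differentiable_id.const_mul c).cexp
  constructor
  · -- divisibility
    refine ⟨fun z => if g z = 1 then (Polynomial.aeval z (Polynomial.derivative p) : ℂ)
      else (f z - 1) / (g z - 1), ?_, ?_⟩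
    · -- differentiable
      intro z₀
      by_cases hz₀ : g z₀ = 1
      · -- removable singularity at an integer
        obtain ⟨n, rfl⟩ := (hg1 z₀).mp hz₀
        set z₀ : ℂ := (n : ℂ)
        set E : ℂ → ℂ := dslope Complex.exp 0 with hE
        have hEd : Differentiable ℂ E := aux_diff_dslope Complex.differentiable_exp 0
        set s : ℂ → ℂ := dslope (fun z : ℂ => (Polynomial.aeval z p : ℂ)) z₀ with hs
        have hsd : Differentiable ℂ s := aux_diff_dslope hP z₀
        set F : ℂ → ℂ := fun z =>
          E (c * (Polynomial.aeval z p - Polynomial.aeval z₀ p)) * s z / E (c * (z - z₀))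
          with hF
        have hFd : DifferentiableAt ℂ F z₀ := by
          apply DifferentiableAt.div
          · exact (((hEd.comp ((hP.sub_const _).const_mul c)).mul hsd) z₀)
          · exact ((hEd.comp ((differentiable_id.sub_const z₀).const_mul c)) z₀)
          · simp [hE, aux_E_zero]
        have hqF : (fun z => if g z = 1 then (Polynomial.aeval z (Polynomial.derivative p) : ℂ)
            else (f z - 1) / (g z - 1)) =ᶠ[nhds z₀] F := by
          filter_upwards [Metric.ball_mem_nhds z₀ one_pos] with z hz
          by_cases hz1 : g z = 1
          · obtain ⟨m, rfl⟩ := (hg1 z).mp hz1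
            have hmn : m = n := by
              have h1 : ‖(m : ℂ) - (n : ℂ)‖ < 1 := by
                simpa [Complex.dist_eq] using hz
              have h2 : ((m - n : ℤ) : ℂ) = (m : ℂ) - (n : ℂ) := by push_cast; ring
              rw [← h2, Complex.norm_intCast] at h1
              have h3 : |m - n| < 1 := by exact_mod_cast h1
              rw [abs_lt] at h3
              omega
            subst hmn
            rw [if_pos hz1]
            have : F ((m : ℂ)) = s ((m : ℂ)) := by
              simp [hF, hE, sub_self, mul_zero, aux_E_zero, z₀]
            rw [this, hs, dslope_same, Polynomial.deriv_aeval]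
          · rw [if_neg hz1]
            have hzne : z ≠ z₀ := by
              rintro rfl
              exact hz1 hz₀
            have hgz : g z - 1 = E (c * (z - z₀)) * (c * (z - z₀)) := by
              have h1 : g z = Complex.exp (c * (z - z₀)) := by
                rw [hg]
                simp only
                rw [show c * z = c * (z - z₀) + c * z₀ by ring, Complex.exp_add]
                have : Complex.exp (c * z₀) = 1 := hz₀ ▸ (by rw [hg])
                rw [this, mul_one]
              rw [h1, aux_E_mul]
            have hfz : f z - 1 =
                E (c * (Polynomial.aeval z p - Polynomial.aeval z₀ p)) *
                  (c * (Polynomial.aeval z p - Polynomial.aeval z₀ p)) := by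
              have h2 : Complex.exp (c * (Polynomial.aeval z₀ p)) = 1 := by
                rw [hPint n, hexpint]
              have h1 : f z = Complex.exp (c * (Polynomial.aeval z p - Polynomial.aeval z₀ p)) := by
                rw [hf]
                simp only
                rw [show c * (Polynomial.aeval z p) =
                  c * (Polynomial.aeval z p - Polynomial.aeval z₀ p) +
                    c * (Polynomial.aeval z₀ p) by ring, Complex.exp_add, h2, mul_one]
              rw [h1, aux_E_mul]
            have hPs : (Polynomial.aeval z p : ℂ) - Polynomial.aeval z₀ p = (z - z₀) * s z := by
              have h := sub_smul_dslope (fun z : ℂ => (Polynomial.aeval z p : ℂ)) z₀ z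
              simp only [smul_eq_mul] at h
              exact h.symm
            have hE2 : E (c * (z - z₀)) ≠ 0 := by
              intro h0
              apply sub_ne_zero.mpr hz1
              rw [hgz, h0, zero_mul]
            have hzz : z - z₀ ≠ 0 := sub_ne_zero.mpr hzne
            rw [hfz, hgz, hF]
            simp only
            set e1 := E (c * ((Polynomial.aeval z p : ℂ) - Polynomial.aeval z₀ p)) with he1
            set e2 := E (c * (z - z₀)) with he2
            rw [hPs]
            field_simp
        exact (hFd.congr_of_eventuallyEq hqF)
      · -- away from the zeros of g - 1
        have hopen : IsOpen {z : ℂ | g z ≠ 1} := by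
          have : {z : ℂ | g z ≠ 1} = g ⁻¹' ({1}ᶜ) := rfl
          rw [this]
          exact IsOpen.preimage hgd.continuous isOpen_compl_singleton
        have hmem : {z : ℂ | g z ≠ 1} ∈ nhds z₀ := hopen.mem_nhds hz₀
        have hqF : (fun z => if g z = 1 then (Polynomial.aeval z (Polynomial.derivative p) : ℂ)
            else (f z - 1) / (g z - 1)) =ᶠ[nhds z₀] fun z => (f z - 1) / (g z - 1) := by
          filter_upwards [hmem] with z hz
          rw [if_neg hz]
        have hdiv : DifferentiableAt ℂ (fun z => (f z - 1) / (g z - 1)) z₀ :=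
          ((hfd z₀).sub_const 1).div ((hgd z₀).sub_const 1) (sub_ne_zero.mpr hz₀)
        exact hdiv.congr_of_eventuallyEq hqF
    · -- the functional identity
      intro z
      dsimp only
      by_cases hz : g z = 1
      · rw [if_pos hz, hz, sub_self, mul_zero]
        obtain ⟨n, rfl⟩ := (hg1 z).mp hz
        rw [hf1 n, sub_self]
      · rw [if_neg hz]
        rw [div_mul_cancel₀ _ (sub_ne_zero.mpr hz)]
  · -- algebraic independence
    rw [algebraicIndependent_iff]
    intro Q hQ
    have hQz : ∀ z : ℂ, MvPolynomial.aeval ![f z, g z] Q = 0 := by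
      intro z
      have h1 : (Pi.evalAlgHom ℂ (fun _ : ℂ => ℂ) z) (MvPolynomial.aeval ![f, g] Q)
          = MvPolynomial.aeval (fun i => (Pi.evalAlgHom ℂ (fun _ : ℂ => ℂ) z) (![f, g] i)) Q :=
        MvPolynomial.comp_aeval_apply _ _ _
      rw [hQ, map_zero] at h1
      have h2 : (fun i => (Pi.evalAlgHom ℂ (fun _ : ℂ => ℂ) z) (![f, g] i)) = ![f z, g z] := by
        funext i
        fin_cases i <;> rfl
      rw [h2] at h1
      exact h1.symm
    -- key: for transcendental w, the polynomial vanishes for all a with b = exp (c*w)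
    have key : ∀ w : ℂ, Transcendental ℚ w → ∀ a : ℂ,
        MvPolynomial.aeval ![a, Complex.exp (c * w)] Q = 0 := by
      intro w hw a
      set b := Complex.exp (c * w) with hb
      have hgw : ∀ n : ℤ, g (w + (n : ℂ)) = b := by
        intro n
        rw [hg]
        simp only
        rw [mul_add, Complex.exp_add, hexpint n, mul_one]
      set Qb : Polynomial ℂ := MvPolynomial.aeval ![Polynomial.X, Polynomial.C b] Q with hQb
      have hroot : ∀ n : ℤ, Polynomial.aeval (f (w + (n : ℂ))) Qb = 0 := by
        intro n
        have h1 : (Polynomial.aeval (f (w + (n:ℂ))) : Polynomial ℂ →ₐ[ℂ] ℂ)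
              (MvPolynomial.aeval ![Polynomial.X, Polynomial.C b] Q)
            = MvPolynomial.aeval
              (fun i => Polynomial.aeval (f (w + (n:ℂ))) (![Polynomial.X, Polynomial.C b] i)) Q :=
          MvPolynomial.comp_aeval_apply _ _ _
        have h2 : (fun i => Polynomial.aeval (f (w + (n:ℂ))) (![Polynomial.X, Polynomial.C b] i))
            = ![f (w + (n:ℂ)), b] := by
          funext i; fin_cases i <;> simp
        rw [h2] at h1
        rw [hQb, h1, ← hgw n]
        exact hQz (w + (n:ℂ))
      have hinj : Function.Injective (fun n : ℤ => f (w + (n : ℂ))) := by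
        intro m n hmn
        by_contra hne
        simp only [hf] at hmn
        obtain ⟨k, hk⟩ := Complex.exp_eq_exp_iff_exists_int.mp hmn
        rw [← hcdef] at hk
        have hk' : (Polynomial.aeval (w + (m:ℂ)) p : ℂ)
            = Polynomial.aeval (w + (n:ℂ)) p + (k : ℂ) := by
          apply mul_left_cancel₀ hc
          rw [hk]
          ring
        set D : Polynomial ℤ := Polynomial.taylor (m : ℤ) p - Polynomial.taylor (n : ℤ) p
            - Polynomial.C k with hD
        have htaylor : ∀ j : ℤ, (Polynomial.aeval w (Polynomial.taylor (j : ℤ) p) : ℂ)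
            = Polynomial.aeval (w + (j:ℂ)) p := by
          intro j
          rw [Polynomial.taylor_apply, Polynomial.aeval_comp]
          have hx : (Polynomial.aeval w (Polynomial.X + Polynomial.C j) : ℂ) = w + (j:ℂ) := by
            simp
          rw [hx]
        have hDw : (Polynomial.aeval w D : ℂ) = 0 := by
          rw [hD, map_sub, map_sub, htaylor m, htaylor n, Polynomial.aeval_C, hk']
          simp only [algebraMap_int_eq, eq_intCast]
          ring
        have hpne : p ≠ 0 := by
          intro h0
          rw [h0] at hp
          simp at hp
        have hD0 : D ≠ 0 := by
          intro h0
          have hd1 : p.natDegree - 1 ≠ 0 := by omega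
          have hcoeff : D.coeff (p.natDegree - 1) = 0 := by rw [h0]; simp
          rw [hD] at hcoeff
          simp only [Polynomial.coeff_sub, Polynomial.taylor_coeff,
            Polynomial.coeff_C, if_neg hd1, sub_zero] at hcoeff
          set h1 := Polynomial.hasseDeriv (p.natDegree - 1) p with hh1
          have hdeg : h1.natDegree ≤ 1 := by
            rw [hh1, Polynomial.natDegree_hasseDeriv]
            omega
          have heval : ∀ x : ℤ, h1.eval x = h1.coeff 1 * x + h1.coeff 0 := by
            intro x
            conv_lhs => rw [Polynomial.eq_X_add_C_of_natDegree_le_one hdeg]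
            simp
          rw [heval m, heval n] at hcoeff
          have hc1 : h1.coeff 1 = (p.natDegree : ℤ) * p.coeff p.natDegree := by
            rw [hh1, Polynomial.hasseDeriv_coeff]
            rw [show 1 + (p.natDegree - 1) = p.natDegree by omega]
            congr 1
            norm_cast
            rw [show p.natDegree - 1 = p.natDegree - 1 from rfl,
              Nat.choose_symm (by omega : 1 ≤ p.natDegree), Nat.choose_one_right]
          have hlc : p.coeff p.natDegree ≠ 0 := by
            rw [Polynomial.coeff_natDegree]
            exact Polynomial.leadingCoeff_ne_zero.mpr hpne
          have hmul : h1.coeff 1 * ((m:ℤ) - n) = 0 := by linarith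
          rcases mul_eq_zero.mp hmul with h | h
          · rw [hc1] at h
            rcases mul_eq_zero.mp h with h' | h'
            · have : p.natDegree = 0 := by exact_mod_cast h'
              omega
            · exact hlc h'
          · exact hne (by omega)
        apply hw
        refine ⟨D.map (algebraMap ℤ ℚ), ?_, ?_⟩
        · intro h0
          apply hD0
          apply Polynomial.map_injective (algebraMap ℤ ℚ)
            (fun x y hxy => by exact_mod_cast hxy)
          rw [h0, Polynomial.map_zero]
        · rw [Polynomial.aeval_map_algebraMap]
          exact hDw
      have hQb0 : Qb = 0 := by
        apply Polynomial.eq_zero_of_infinite_isRoot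
        apply Set.infinite_of_injective_forall_mem hinj
        intro n
        have h := hroot n
        simpa [Polynomial.IsRoot] using h
      have h1 : (Polynomial.aeval a : Polynomial ℂ →ₐ[ℂ] ℂ)
            (MvPolynomial.aeval ![Polynomial.X, Polynomial.C b] Q)
          = MvPolynomial.aeval (fun i => Polynomial.aeval a (![Polynomial.X, Polynomial.C b] i)) Q :=
        MvPolynomial.comp_aeval_apply _ _ _
      have h2 : (fun i => Polynomial.aeval a (![Polynomial.X, Polynomial.C b] i)) = ![a, b] := by
        funext i; fin_cases i <;> simp
      rw [h2] at h1
      rw [← h1, ← hQb, hQb0, map_zero]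
    -- infinitely many special b values
    have hcount : Set.Countable {t : ℝ | IsAlgebraic ℚ (Complex.I * (t : ℂ))} := by
      have h0 : Set.Countable {x : ℂ | IsAlgebraic ℚ x} := Algebraic.countable ℚ ℂ
      have hinj : Function.Injective (fun t : ℝ => (Complex.I * (t : ℂ))) := by
        intro a b hab
        have := mul_left_cancel₀ Complex.I_ne_zero hab
        exact_mod_cast this
      exact h0.preimage hinj
    have hTinf : {t : ℝ | Transcendental ℚ (Complex.I * (t : ℂ))}.Infinite := by
      by_contra hfin
      rw [Set.not_infinite] at hfin
      have huniv : (Set.univ : Set ℝ).Countable := by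
        have he : (Set.univ : Set ℝ) = {t : ℝ | Transcendental ℚ (Complex.I * (t : ℂ))}
            ∪ {t : ℝ | IsAlgebraic ℚ (Complex.I * (t : ℂ))} := by
          ext t
          simp only [Set.mem_univ, Set.mem_union, Set.mem_setOf_eq, true_iff]
          exact (em _).symm.imp id id
        rw [he]
        exact (hfin.countable).union hcount
      exact Cardinal.not_countable_real huniv
    have hform : ∀ t : ℝ, Complex.exp (c * (Complex.I * (t:ℂ)))
        = ((Real.exp (-(2 * Real.pi * t)) : ℝ) : ℂ) := by
      intro t
      rw [Complex.ofReal_exp]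
      congr 1
      rw [hcdef]
      push_cast
      linear_combination (2 * (Real.pi : ℂ) * (t:ℂ)) * Complex.I_sq
    have hSinf : ((fun t : ℝ => Complex.exp (c * (Complex.I * (t:ℂ)))) ''
        {t : ℝ | Transcendental ℚ (Complex.I * (t : ℂ))}).Infinite := by
      apply Set.Infinite.image ?_ hTinf
      intro t1 _ t2 _ h12
      have h12' : Complex.exp (c * (Complex.I * (t1:ℂ))) = Complex.exp (c * (Complex.I * (t2:ℂ))) := h12
      rw [hform t1, hform t2] at h12'
      have h13 : Real.exp (-(2 * Real.pi * t1)) = Real.exp (-(2 * Real.pi * t2)) :=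
        Complex.ofReal_inj.mp h12'
      have h14 := Real.exp_injective h13
      have hpi : (2 : ℝ) * Real.pi ≠ 0 := by positivity
      field_simp at h14
      exact neg_inj.mp h14
    have hall : ∀ a b : ℂ, MvPolynomial.aeval ![a, b] Q = 0 := by
      intro a b
      set Ra : Polynomial ℂ := MvPolynomial.aeval ![Polynomial.C a, Polynomial.X] Q with hRa
      have haux : ∀ b' : ℂ, Polynomial.aeval b' Ra = MvPolynomial.aeval ![a, b'] Q := by
        intro b'
        have h1 : (Polynomial.aeval b' : Polynomial ℂ →ₐ[ℂ] ℂ)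
              (MvPolynomial.aeval ![Polynomial.C a, Polynomial.X] Q)
            = MvPolynomial.aeval
              (fun i => Polynomial.aeval b' (![Polynomial.C a, Polynomial.X] i)) Q :=
          MvPolynomial.comp_aeval_apply _ _ _
        have h2 : (fun i => Polynomial.aeval b' (![Polynomial.C a, Polynomial.X] i)) = ![a, b'] := by
          funext i; fin_cases i <;> simp
        rw [h2] at h1
        rw [hRa]
        exact h1
      have hRa0 : Ra = 0 := by
        apply Polynomial.eq_zero_of_infinite_isRoot
        apply Set.Infinite.mono ?_ hSinf
        rintro x ⟨t, ht, rfl⟩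
        have h := haux (Complex.exp (c * (Complex.I * (t:ℂ))))
        rw [key _ ht a] at h
        simpa [Polynomial.IsRoot] using h
      rw [← haux b, hRa0, map_zero]
    apply MvPolynomial.funext (R := ℂ)
    intro x
    have h := hall (x 0) (x 1)
    have hx : ![x 0, x 1] = x := by funext i; fin_cases i <;> rfl
    rw [hx] at h
    simpa using h
end
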